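/- Let G be a triangle-free graph (a flag 1-dimensional simplicial complex) on exactly 2(m+1) vertices such that for every vertex v, removing any set of fewer than m vertices leaves a connected graph in which the neighborhood of every remaining vertex is nonempty, and every vertex of G has degree at least m+1. Then G is isomorphic to the complete bipartite graph K_{m+1, m+1}. -/

import Mathlib

open Finset SimpleGraph

/-- a triangle-free graph on exactly `2(m+1)` vertices such that
removing any set of fewer than `m` vertices leaves a connected graph in which
every remaining vertex has a remaining neighbor, and in which every vertex has
degree at least `m+1`, is isomorphic to the complete bipartite graph
`K_{m+1,m+1}`. -/
theorem stmt4 {V : Type*} [Fintype V] (m : ℕ) (G : SimpleGraph V)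
    (hcard : Fintype.card V = 2 * (m + 1))
    (htf : G.CliqueFree 3)
    (hconn : ∀ A : Finset V, A.card < m →
      (G.induce ((↑A : Set V)ᶜ)).Connected ∧
      ∀ v : V, v ∉ A → ∃ w : V, w ∉ A ∧ G.Adj v w)
    (hdeg : ∀ v : V, m + 1 ≤ (G.neighborSet v).ncard) :
    Nonempty (G ≃g completeBipartiteGraph (Fin (m + 1)) (Fin (m + 1))) := by
  classical
  set n := m + 1 with hn
  have tf : ∀ a b c : V, G.Adj a b → G.Adj a c → G.Adj b c → False := by
    intro a b c hab hac hbc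
    exact htf {a, b, c} (SimpleGraph.is3Clique_iff.mpr ⟨a, b, c, hab, hac, hbc, rfl⟩)
  have hdeg' : ∀ v : V, n ≤ (G.neighborFinset v).card := by
    intro v
    have h := hdeg v
    rwa [Set.ncard_eq_toFinset_card'] at h
  have hVpos : 0 < Fintype.card V := by rw [hcard]; omega
  obtain ⟨u⟩ := Fintype.card_pos_iff.mp hVpos
  have hune : (G.neighborFinset u).Nonempty :=
    Finset.card_pos.mp (lt_of_lt_of_le (by omega) (hdeg' u))
  obtain ⟨v, hv⟩ := hune
  rw [mem_neighborFinset] at hv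
  set A := G.neighborFinset u with hAdef
  set B := G.neighborFinset v with hBdef
  have hdisj : Disjoint A B := by
    rw [Finset.disjoint_left]
    intro w hwA hwB
    rw [hAdef, mem_neighborFinset] at hwA
    rw [hBdef, mem_neighborFinset] at hwB
    exact tf u v w hv hwA hwB
  have hcardle : A.card + B.card ≤ 2 * n := by
    have h := Finset.card_le_univ (A ∪ B)
    rw [Finset.card_union_of_disjoint hdisj, hcard] at h
    omega
  have hAge : n ≤ A.card := by rw [hAdef]; exact hdeg' u
  have hBge : n ≤ B.card := by rw [hBdef]; exact hdeg' v
  have hA : A.card = n := by omega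
  have hB : B.card = n := by omega
  have hunion : A ∪ B = Finset.univ := by
    apply Finset.eq_univ_of_card
    rw [Finset.card_union_of_disjoint hdisj, hcard]; omega
  have hmemAB : ∀ x : V, x ∈ A ∨ x ∈ B := by
    intro x
    exact Finset.mem_union.mp (hunion ▸ Finset.mem_univ x)
  have hBcompl : ∀ x : V, x ∈ B ↔ x ∉ A := by
    intro x
    constructor
    · intro hx hxA; exact (Finset.disjoint_left.mp hdisj hxA) hx
    · intro hx; rcases hmemAB x with h | h
      · exact absurd h hx
      · exact h
  have keyA : ∀ x ∈ A, G.neighborFinset x = B := by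
    intro x hx
    have hxu : G.Adj u x := by rw [hAdef, mem_neighborFinset] at hx; exact hx
    have hsub : G.neighborFinset x ⊆ B := by
      intro y hy
      rw [mem_neighborFinset] at hy
      rw [hBcompl]
      intro hyA
      rw [hAdef, mem_neighborFinset] at hyA
      exact tf u x y hxu hyA hy
    exact Finset.eq_of_subset_of_card_le hsub (by rw [hB]; exact hdeg' x)
  have keyB : ∀ x ∈ B, G.neighborFinset x = A := by
    intro x hx
    have hxv : G.Adj v x := by rw [hBdef, mem_neighborFinset] at hx; exact hx
    have hsub : G.neighborFinset x ⊆ A := by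
      intro y hy
      rw [mem_neighborFinset] at hy
      by_contra hyA
      have hyB : y ∈ B := (hBcompl y).mpr hyA
      rw [hBdef, mem_neighborFinset] at hyB
      exact tf v x y hxv hyB hy
    exact Finset.eq_of_subset_of_card_le hsub (by rw [hA]; exact hdeg' x)
  have hadj : ∀ x y : V, G.Adj x y ↔ ((x ∈ A ∧ y ∈ B) ∨ (x ∈ B ∧ y ∈ A)) := by
    intro x y
    constructor
    · intro h
      rcases hmemAB x with hx | hx
      · left
        refine ⟨hx, ?_⟩
        rw [← keyA x hx, mem_neighborFinset]; exact h
      · right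
        refine ⟨hx, ?_⟩
        rw [← keyB x hx, mem_neighborFinset]; exact h
    · rintro (⟨hx, hy⟩ | ⟨hx, hy⟩)
      · rw [← keyA x hx, mem_neighborFinset] at hy; exact hy
      · rw [← keyB x hx, mem_neighborFinset] at hy; exact hy
  -- build the equivalence
  have eA : {x // x ∈ A} ≃ Fin n := by
    apply Fintype.equivFinOfCardEq
    rw [Fintype.card_coe, hA]
  have eB : {x // x ∈ B} ≃ Fin n := by
    apply Fintype.equivFinOfCardEq
    rw [Fintype.card_coe, hB]
  have eNB : {x : V // ¬ x ∈ A} ≃ {x // x ∈ B} :=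
    Equiv.subtypeEquivRight (fun x => (hBcompl x).symm)
  let f : V ≃ Fin n ⊕ Fin n :=
    (Equiv.sumCompl (· ∈ A)).symm.trans (Equiv.sumCongr eA (eNB.trans eB))
  have hfl : ∀ (x : V) (h : x ∈ A), f x = Sum.inl (eA ⟨x, h⟩) := by
    intro x h
    simp only [f, Equiv.trans_apply, Equiv.sumCompl_symm_apply_of_pos h,
      Equiv.sumCongr_apply, Sum.map_inl]
  have hfr : ∀ (x : V) (h : x ∉ A), f x = Sum.inr (eB (eNB ⟨x, h⟩)) := by
    intro x h
    simp only [f, Equiv.trans_apply, Equiv.sumCompl_symm_apply_of_neg h,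
      Equiv.sumCongr_apply, Sum.map_inr, Equiv.trans_apply]
  refine ⟨⟨f, ?_⟩⟩
  intro x y
  rw [hadj x y]
  by_cases hx : x ∈ A <;> by_cases hy : y ∈ A
  · rw [hfl x hx, hfl y hy]
    simp [hBcompl, hx, hy]
  · rw [hfl x hx, hfr y hy]
    simp [hBcompl, hx, hy]
  · rw [hfr x hx, hfl y hy]
    simp [hBcompl, hx, hy]
  · rw [hfr x hx, hfr y hy]
    simp [hBcompl, hx, hy]
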